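/- arXiv:1810.00615 — 4 statements merged into one kernel-verified Lean document; each statement's English description precedes it below -/
import Mathlib

section
/- The block circulant preconditioner 𝒫 = I_ℓ ⊗ A_0 + Σ ⊗ A_1 ∈ ℂ^{nℓ×nℓ} is invertible if and only if A_0 + ω^{−j} A_1 is invertible for every j ∈ {0,…,ℓ−1}; in that case 𝒫⁻¹ = (U ⊗ I_n) · D · (Uᴴ ⊗ I_n), where D is the block diagonal matrix whose j-th diagonal block is (A_0 + ω^{−j} A_1)⁻¹. -/
open Complex Matrix Kronecker


lemma bcp_root_sum (ℓ : ℕ) (hℓ : 1 ≤ ℓ) {ω : ℂ} (hprim : IsPrimitiveRoot ω ℓ) (s : ℤ) :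
    ∑ m : Fin ℓ, ω ^ ((m : ℤ) * s) = if (ℓ : ℤ) ∣ s then (ℓ : ℂ) else 0 := by
  have hω1 : ω ^ (ℓ : ℤ) = 1 := by
    rw [zpow_natCast]; exact hprim.pow_eq_one
  have hterm : ∀ m : Fin ℓ, ω ^ ((m : ℤ) * s) = (ω ^ s) ^ (m : ℕ) := by
    intro m
    rw [mul_comm, _root_.zpow_mul, ← zpow_natCast (ω ^ s)]
  by_cases hd : (ℓ : ℤ) ∣ s
  · have hζ : ω ^ s = 1 := (hprim.zpow_eq_one_iff_dvd s).mpr hd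
    simp [hterm, hζ, hd]
  · have hζ : ω ^ s ≠ 1 := fun h => hd ((hprim.zpow_eq_one_iff_dvd s).mp h)
    have hζℓ : (ω ^ s) ^ ℓ = 1 := by
      rw [← zpow_natCast (ω ^ s), ← _root_.zpow_mul, mul_comm, _root_.zpow_mul, hω1, _root_.one_zpow]
    simp only [hterm]
    rw [Fin.sum_univ_eq_sum_range (fun m => (ω ^ s) ^ m) ℓ, geom_sum_eq hζ, hζℓ]
    simp [hd]

/-- The block circulant preconditioner `𝒫 = Iₗ ⊗ A₀ + Σ ⊗ A₁` is invertible iff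
`A₀ + ω^(-j) • A₁` is invertible for every `j`; in that case
`𝒫⁻¹ = (U ⊗ Iₙ) * D * (Uᴴ ⊗ Iₙ)` where `D` is block diagonal with `j`-th block
`(A₀ + ω^(-j) • A₁)⁻¹`. -/
theorem block_circulant_preconditioner_inverse
    (ℓ n : ℕ) (hℓ : 1 ≤ ℓ) (hn : 1 ≤ n)
    (ω : ℂ) (hω : ω = Complex.exp (2 * Real.pi * Complex.I / ℓ))
    (A₀ A₁ : Matrix (Fin n) (Fin n) ℂ)
    (Sigma : Matrix (Fin ℓ) (Fin ℓ) ℂ)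
    (hSigma : ∀ j k : Fin ℓ, Sigma j k = if (j : ℕ) = ((k : ℕ) + 1) % ℓ then 1 else 0)
    (U : Matrix (Fin ℓ) (Fin ℓ) ℂ)
    (hU : ∀ j k : Fin ℓ, U j k = ω ^ ((j : ℕ) * (k : ℕ)) / Real.sqrt ℓ)
    (P : Matrix (Fin ℓ × Fin n) (Fin ℓ × Fin n) ℂ)
    (hP : P = (1 : Matrix (Fin ℓ) (Fin ℓ) ℂ) ⊗ₖ A₀ + Sigma ⊗ₖ A₁)
    (D : Matrix (Fin ℓ × Fin n) (Fin ℓ × Fin n) ℂ)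
    (hD : ∀ p q : Fin ℓ × Fin n,
      D p q = if p.1 = q.1 then (A₀ + ω ^ (-(p.1 : ℤ)) • A₁)⁻¹ p.2 q.2 else 0) :
    (IsUnit P ↔ ∀ j : Fin ℓ, IsUnit (A₀ + ω ^ (-(j : ℤ)) • A₁)) ∧
    ((∀ j : Fin ℓ, IsUnit (A₀ + ω ^ (-(j : ℤ)) • A₁)) →
      P⁻¹ = (U ⊗ₖ (1 : Matrix (Fin n) (Fin n) ℂ)) * D *
        (Uᴴ ⊗ₖ (1 : Matrix (Fin n) (Fin n) ℂ))) := by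
  have hℓ0 : ℓ ≠ 0 := by omega
  have hprim : IsPrimitiveRoot ω ℓ := hω ▸ Complex.isPrimitiveRoot_exp ℓ hℓ0
  have hωne : ω ≠ 0 := by rw [hω]; exact Complex.exp_ne_zero _
  have hconj : (starRingEnd ℂ) ω = ω⁻¹ := by
    rw [hω, ← Complex.exp_conj, ← Complex.exp_neg]
    congr 1
    simp only [map_div₀, _root_.map_mul, Complex.conj_I, Complex.conj_ofReal, map_ofNat,
      Complex.conj_natCast]
    ring
  have hℓC : (ℓ : ℂ) ≠ 0 := Nat.cast_ne_zero.mpr hℓ0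
  have hsq : (Real.sqrt ℓ : ℂ) * (Real.sqrt ℓ : ℂ) = (ℓ : ℂ) := by
    rw [← Complex.ofReal_mul, Real.mul_self_sqrt (Nat.cast_nonneg ℓ)]
    push_cast
    ring
  have hUconj : ∀ j k m : Fin ℓ, U j m * (starRingEnd ℂ) (U k m)
      = ω ^ ((m : ℤ) * ((j : ℤ) - (k : ℤ))) * (ℓ : ℂ)⁻¹ := by
    intro j k m
    rw [hU, hU, map_div₀, map_pow, hconj, Complex.conj_ofReal]
    rw [div_mul_div_comm, hsq]
    rw [div_eq_mul_inv]
    congr 1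
    rw [← zpow_natCast ω, ← zpow_natCast ω⁻¹, _root_.inv_zpow, ← _root_.zpow_neg, ← zpow_add₀ hωne]
    congr 1
    push_cast
    ring
  have hdvd1 : ∀ j k : Fin ℓ, ((ℓ : ℤ) ∣ ((j : ℤ) - (k : ℤ))) ↔ j = k := by
    intro j k
    have hj := j.is_lt; have hk := k.is_lt
    constructor
    · intro h
      have h0 : (j : ℤ) - k = 0 := Int.eq_zero_of_abs_lt_dvd h (abs_lt.mpr (by omega))
      exact Fin.ext (by omega)
    · rintro rfl; simp
  have hdvd2 : ∀ j k : Fin ℓ, ((ℓ : ℤ) ∣ ((j : ℤ) - (k : ℤ) - 1)) ↔ (j : ℕ) = ((k : ℕ) + 1) % ℓ := by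
    intro j k
    have hj := j.is_lt; have hk := k.is_lt
    by_cases hc : (k : ℕ) + 1 = ℓ
    · rw [hc, Nat.mod_self]
      constructor
      · intro h
        by_cases hc2 : (j : ℤ) - k - 1 = -(ℓ : ℤ)
        · omega
        · have h0 : (j : ℤ) - k - 1 = 0 := Int.eq_zero_of_abs_lt_dvd h (abs_lt.mpr (by omega))
          omega
      · intro h; exact ⟨-1, by omega⟩
    · rw [Nat.mod_eq_of_lt (by omega)]
      constructor
      · intro h
        have h0 : (j : ℤ) - k - 1 = 0 := Int.eq_zero_of_abs_lt_dvd h (abs_lt.mpr (by omega))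
        omega
      · intro h; exact ⟨0, by omega⟩
  have hsumA : ∀ j k : Fin ℓ, ∑ m : Fin ℓ, U j m * (starRingEnd ℂ) (U k m)
      = if j = k then 1 else 0 := by
    intro j k
    simp only [hUconj]
    rw [← Finset.sum_mul, bcp_root_sum ℓ hℓ hprim]
    simp only [hdvd1 j k]
    split
    · exact mul_inv_cancel₀ hℓC
    · exact zero_mul _
  have hsumB : ∀ j k : Fin ℓ, ∑ m : Fin ℓ,
      U j m * (starRingEnd ℂ) (U k m) * ω ^ (-(m : ℤ)) = Sigma j k := by
    intro j k
    have hterm : ∀ m : Fin ℓ, U j m * (starRingEnd ℂ) (U k m) * ω ^ (-(m : ℤ))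
        = ω ^ ((m : ℤ) * ((j : ℤ) - (k : ℤ) - 1)) * (ℓ : ℂ)⁻¹ := by
      intro m
      rw [hUconj]
      rw [mul_right_comm, ← zpow_add₀ hωne]
      congr 2
      ring
    simp only [hterm]
    rw [← Finset.sum_mul, bcp_root_sum ℓ hℓ hprim, hSigma]
    simp only [hdvd2 j k]
    split
    · exact mul_inv_cancel₀ hℓC
    · exact zero_mul _
  -- unitary
  have hUU : U * Uᴴ = 1 := by
    ext j k
    rw [Matrix.mul_apply, Matrix.one_apply]
    simp only [Matrix.conjTranspose_apply, RCLike.star_def]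
    exact hsumA j k
  set V : Matrix (Fin ℓ × Fin n) (Fin ℓ × Fin n) ℂ := U ⊗ₖ (1 : Matrix (Fin n) (Fin n) ℂ) with hV
  set W : Matrix (Fin ℓ × Fin n) (Fin ℓ × Fin n) ℂ := Uᴴ ⊗ₖ (1 : Matrix (Fin n) (Fin n) ℂ) with hW
  have hVW : V * W = 1 := by
    rw [hV, hW, ← Matrix.mul_kronecker_mul, hUU, Matrix.one_mul, Matrix.one_kronecker_one]
  have hWV : W * V = 1 := mul_eq_one_comm.mp hVW
  set B : Fin ℓ → Matrix (Fin n) (Fin n) ℂ := fun j => A₀ + ω ^ (-(j : ℤ)) • A₁ with hB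
  set e : Fin ℓ × Fin n ≃ Fin n × Fin ℓ := Equiv.prodComm _ _ with he
  set M : Matrix (Fin ℓ × Fin n) (Fin ℓ × Fin n) ℂ := (Matrix.blockDiagonal B).submatrix e e
    with hM
  have hMapp : ∀ j k : Fin ℓ, ∀ a b : Fin n,
      M (j, a) (k, b) = if j = k then B j a b else 0 := by
    intro j k a b
    rw [hM]
    simp [Matrix.blockDiagonal_apply, he]
  have hPfact : P = V * M * W := by
    rw [hP]
    ext ⟨j, a⟩ ⟨k, b⟩
    have hRHS : (V * M * W) (j, a) (k, b)
        = ∑ m : Fin ℓ, U j m * (starRingEnd ℂ) (U k m) * (B m a b) := by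
      rw [Matrix.mul_assoc, Matrix.mul_apply]
      rw [Fintype.sum_prod_type]
      have hinner : ∀ m : Fin ℓ, ∀ c : Fin n,
          (M * W) (m, c) (k, b) = B m c b * (starRingEnd ℂ) (U k m) := by
        intro m c
        rw [Matrix.mul_apply, Fintype.sum_prod_type]
        simp [hMapp, hW, Matrix.one_apply, Matrix.conjTranspose_apply, ite_mul, mul_ite,
          Finset.sum_ite_eq, Finset.sum_ite_eq']
      simp only [hinner]
      simp [hV, Matrix.one_apply, ite_mul, mul_ite, Finset.sum_ite_eq, Finset.sum_ite_eq']
      exact Finset.sum_congr rfl (fun m _ => by ring)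
    rw [hRHS]
    have hterm : ∀ m : Fin ℓ, U j m * (starRingEnd ℂ) (U k m) * (B m a b)
        = U j m * (starRingEnd ℂ) (U k m) * A₀ a b
          + U j m * (starRingEnd ℂ) (U k m) * ω ^ (-(m : ℤ)) * A₁ a b := by
      intro m
      rw [hB]
      simp only [Matrix.add_apply, Matrix.smul_apply, smul_eq_mul]
      ring
    simp only [hterm]
    rw [Finset.sum_add_distrib, ← Finset.sum_mul, ← Finset.sum_mul, hsumA, hsumB]
    simp [Matrix.add_apply, Matrix.kroneckerMap_apply, Matrix.one_apply, ite_mul]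
  -- determinant
  have hdetVW : V.det * W.det = 1 := by rw [← Matrix.det_mul, hVW, Matrix.det_one]
  have hdetM : M.det = ∏ j : Fin ℓ, (B j).det := by
    rw [hM, Matrix.det_submatrix_equiv_self, Matrix.det_blockDiagonal]
  have hdetP : P.det = ∏ j : Fin ℓ, (B j).det := by
    rw [hPfact, Matrix.det_mul, Matrix.det_mul, ← hdetM]
    calc V.det * M.det * W.det = M.det * (V.det * W.det) := by ring
    _ = M.det := by rw [hdetVW, mul_one]
  have hiff : IsUnit P ↔ ∀ j : Fin ℓ, IsUnit (B j) := by
    rw [Matrix.isUnit_iff_isUnit_det, isUnit_iff_ne_zero, hdetP, Finset.prod_ne_zero_iff]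
    constructor
    · intro h j
      rw [Matrix.isUnit_iff_isUnit_det, isUnit_iff_ne_zero]
      exact h j (Finset.mem_univ j)
    · intro h j _
      rw [← isUnit_iff_ne_zero, ← Matrix.isUnit_iff_isUnit_det]
      exact h j
  refine ⟨hiff, ?_⟩
  intro h
  have hDeq : D = (Matrix.blockDiagonal fun j => (B j)⁻¹).submatrix e e := by
    ext ⟨j, a⟩ ⟨k, b⟩
    rw [hD]
    simp [Matrix.blockDiagonal_apply, he, hB]
  have hMD : M * D = 1 := by
    rw [hM, hDeq, Matrix.submatrix_mul_equiv, ← Matrix.blockDiagonal_mul]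
    have : (fun k => B k * (B k)⁻¹) = fun _ => (1 : Matrix (Fin n) (Fin n) ℂ) := by
      funext j
      exact Matrix.mul_nonsing_inv _ ((Matrix.isUnit_iff_isUnit_det _).mp (h j))
    rw [this]
    have h1 : (Matrix.blockDiagonal fun _ : Fin ℓ => (1 : Matrix (Fin n) (Fin n) ℂ)) = 1 :=
      Matrix.blockDiagonal_one
    rw [h1, Matrix.submatrix_one_equiv]
  have key : P * (V * D * W) = 1 := by
    rw [hPfact]
    calc V * M * W * (V * D * W) = V * (M * (W * V * (D * W))) := by
          simp only [Matrix.mul_assoc]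
    _ = V * (M * (D * W)) := by rw [hWV, Matrix.one_mul]
    _ = V * (M * D * W) := by simp only [Matrix.mul_assoc]
    _ = V * W := by rw [hMD, Matrix.one_mul]
    _ = 1 := hVW
  rw [Matrix.inv_eq_right_inv key]
end

section
/- If the block circulant preconditioner 𝒫 is invertible, then the preconditioned matrix is a rank-at-most-n perturbation of the identity: rank(𝒫⁻¹ · 𝒜 − I_{nℓ}) ≤ n. -/
open Complex Matrix Kronecker

/-- If the block circulant preconditioner `𝒫` is invertible, the preconditioned
matrix is a rank-at-most-`n` perturbation of the identity:
`rank (𝒫⁻¹ * 𝒜 - 1) ≤ n`. -/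
theorem preconditioned_matrix_rank_perturbation
    (n ℓ : ℕ) (hn : 1 ≤ n) (hℓ : 2 ≤ ℓ)
    (A₀ A₁ : Matrix (Fin n) (Fin n) ℂ)
    (N : Matrix (Fin ℓ) (Fin ℓ) ℂ)
    (hN : ∀ j k : Fin ℓ, N j k = if (j : ℕ) = (k : ℕ) + 1 then 1 else 0)
    (Sigma : Matrix (Fin ℓ) (Fin ℓ) ℂ)
    (hSigma : ∀ j k : Fin ℓ, Sigma j k = if (j : ℕ) = ((k : ℕ) + 1) % ℓ then 1 else 0)
    (𝒜 P : Matrix (Fin ℓ × Fin n) (Fin ℓ × Fin n) ℂ)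
    (h𝒜 : 𝒜 = (1 : Matrix (Fin ℓ) (Fin ℓ) ℂ) ⊗ₖ A₀ + N ⊗ₖ A₁)
    (hP : P = (1 : Matrix (Fin ℓ) (Fin ℓ) ℂ) ⊗ₖ A₀ + Sigma ⊗ₖ A₁)
    (hPinv : IsUnit P) :
    (P⁻¹ * 𝒜 - 1).rank ≤ n := by
  have hdet : IsUnit P.det := (Matrix.isUnit_iff_isUnit_det P).mp hPinv
  have h1 : P⁻¹ * 𝒜 - 1 = P⁻¹ * (𝒜 - P) := by
    rw [Matrix.mul_sub, Matrix.nonsing_inv_mul P hdet]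
  set X : Matrix (Fin ℓ × Fin n) (Fin n) ℂ :=
    fun p r => if (p.1 : ℕ) = 0 ∧ p.2 = r then (-1 : ℂ) else 0 with hX
  set Y : Matrix (Fin n) (Fin ℓ × Fin n) ℂ :=
    fun r q => if (q.1 : ℕ) = ℓ - 1 then A₁ r q.2 else 0 with hY
  have hfac : 𝒜 - P = X * Y := by
    ext ⟨j, i⟩ ⟨k, i'⟩
    have hsum : (X * Y) (j, i) (k, i')
        = (if (j : ℕ) = 0 ∧ (k : ℕ) = ℓ - 1 then -A₁ i i' else 0) := by
      rw [Matrix.mul_apply]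
      simp only [hX, hY]
      rw [Finset.sum_eq_single i]
      · by_cases h0 : (j : ℕ) = 0 <;> by_cases hk : (k : ℕ) = ℓ - 1 <;>
          simp [h0, hk]
      · intro b _ hb
        simp [hb.symm]
      · simp
    rw [hsum]
    simp only [h𝒜, hP, Matrix.sub_apply, Matrix.add_apply,
      Matrix.kroneckerMap_apply, hN j k, hSigma j k]
    have hj := j.isLt
    have hk := k.isLt
    by_cases h0 : (j : ℕ) = 0 ∧ (k : ℕ) = ℓ - 1
    · have h1 : ¬ ((j : ℕ) = (k : ℕ) + 1) := by omega
      have h2 : ((k : ℕ) + 1) % ℓ = 0 := by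
        have : (k : ℕ) + 1 = ℓ := by omega
        simp [this]
      have h3 : (j : ℕ) = ((k : ℕ) + 1) % ℓ := by omega
      have hne : j ≠ k := Fin.ne_of_val_ne (by omega)
      rw [if_pos h0, if_neg h1, if_pos h3, Matrix.one_apply_ne hne]
      ring
    · rcases Nat.lt_or_ge ((k : ℕ) + 1) ℓ with h | h
      · have h2 : ((k : ℕ) + 1) % ℓ = (k : ℕ) + 1 := Nat.mod_eq_of_lt h
        rw [if_neg h0, h2]
        ring
      · have hke : (k : ℕ) + 1 = ℓ := by omega
        have h2 : ((k : ℕ) + 1) % ℓ = 0 := by simp [hke]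
        have hj0 : (j : ℕ) ≠ 0 := by
          intro hj0; exact h0 ⟨hj0, by omega⟩
        have h1 : ¬ ((j : ℕ) = (k : ℕ) + 1) := by omega
        have h3 : ¬ ((j : ℕ) = ((k : ℕ) + 1) % ℓ) := by omega
        rw [if_neg h0, if_neg h1, if_neg h3]
        ring
  calc (P⁻¹ * 𝒜 - 1).rank ≤ (𝒜 - P).rank := by
        rw [h1]; exact Matrix.rank_mul_le_right _ _
    _ = (X * Y).rank := by rw [hfac]
    _ ≤ X.rank := Matrix.rank_mul_le_left X Y
    _ ≤ Fintype.card (Fin n) := Matrix.rank_le_card_width X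
    _ = n := Fintype.card_fin n
end

section
/- If A ∈ ℂ^{N×N} is invertible and rank(A − I_N) ≤ r, then for every b ∈ ℂ^N the vector A⁻¹ b lies in the Krylov subspace span{b, A b, A² b, …, A^r b}; hence GMRES applied to A x = b terminates with the exact solution in at most r+1 iterations in exact arithmetic. -/
open Complex Matrix Polynomial

private lemma krylov_sum_mulVec {n : ℕ} {ι : Type*} (s : Finset ι)
    (M : ι → Matrix (Fin n) (Fin n) ℂ) (v : Fin n → ℂ) :
    (∑ i ∈ s, M i) *ᵥ v = ∑ i ∈ s, M i *ᵥ v := by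
  induction s using Finset.cons_induction with
  | empty => simp
  | cons a s ha ih => simp [Finset.sum_cons, Matrix.add_mulVec, ih]

/-- If `A` is invertible and `rank (A - 1) ≤ r`, then for every `b` the vector
`A⁻¹ *ᵥ b` lies in the Krylov subspace `span {b, A b, A² b, …, Aʳ b}`; hence
GMRES terminates with the exact solution in at most `r + 1` iterations. -/
theorem inverse_in_krylov_subspace
    (N r : ℕ)
    (A : Matrix (Fin N) (Fin N) ℂ) (hA : IsUnit A)
    (hrank : (A - 1).rank ≤ r)
    (b : Fin N → ℂ) :
    A⁻¹ *ᵥ b ∈ Submodule.span ℂ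
      (Set.range fun i : Fin (r + 1) => (A ^ (i : ℕ)) *ᵥ b) := by
  have hAdet := (Matrix.isUnit_iff_isUnit_det A).mp hA
  set V := Submodule.span ℂ (Set.range fun i : Fin (r + 1) => (A ^ (i : ℕ)) *ᵥ b) with hV
  have hmem : ∀ i : ℕ, i ≤ r → (A ^ i) *ᵥ b ∈ V := by
    intro i hi
    exact Submodule.subset_span ⟨⟨i, Nat.lt_succ_of_le hi⟩, rfl⟩
  -- Step 1: the vectors (A-1)^(i+1) b, i = 0..r, are linearly dependent
  have hdep : ¬ LinearIndependent ℂ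
      (fun i : Fin (r+1) => ((A - 1) ^ ((i:ℕ)+1)) *ᵥ b) := by
    intro h
    set W := LinearMap.range (A - 1).mulVecLin with hW
    have hr : ∀ i : Fin (r+1), ((A - 1) ^ ((i:ℕ)+1)) *ᵥ b ∈ W := by
      intro i
      exact ⟨((A - 1) ^ (i:ℕ)) *ᵥ b, by
        simp only [Matrix.mulVecLin_apply, Matrix.mulVec_mulVec, ← pow_succ']⟩
    have h' : LinearIndependent ℂ
        (fun i : Fin (r+1) => (⟨((A - 1) ^ ((i:ℕ)+1)) *ᵥ b, hr i⟩ : W)) :=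
      LinearIndependent.of_comp W.subtype h
    have hcard := h'.fintype_card_le_finrank
    simp only [Fintype.card_fin] at hcard
    have hrk : (A - 1).rank = Module.finrank ℂ W := rfl
    omega
  obtain ⟨c, hcsum, i₀, hci₀⟩ := Fintype.not_linearIndependent_iff.mp hdep
  -- Step 2: build an annihilating polynomial of A of degree ≤ r+1
  set q : ℂ[X] := ∑ i : Fin (r+1), C (c i) * X ^ ((i:ℕ)+1) with hq
  have hq0 : q ≠ 0 := by
    intro h
    apply hci₀
    have h2 := congrArg (fun p : ℂ[X] => p.coeff ((i₀:ℕ)+1)) h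
    simp only [hq, finset_sum_coeff, coeff_C_mul, coeff_X_pow, coeff_zero] at h2
    rw [Finset.sum_eq_single i₀] at h2
    · simpa using h2
    · intro j _ hj
      have : ¬ ((i₀:ℕ)+1 = (j:ℕ)+1) := by
        intro hc; exact hj (Fin.ext (by omega))
      simp [this, Ne.symm]
      intro h
      exact absurd (by omega : (i₀:ℕ)+1 = (j:ℕ)+1) this
    · simp
  have hqdeg : q.natDegree ≤ r + 1 := by
    apply Polynomial.natDegree_sum_le_of_forall_le
    intro i _
    calc (C (c i) * X ^ ((i:ℕ)+1)).natDegree ≤ (i:ℕ)+1 := natDegree_C_mul_X_pow_le _ _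
      _ ≤ r + 1 := by omega
  have hqev : (Polynomial.aeval (A - 1) q) *ᵥ b = 0 := by
    rw [hq, map_sum, krylov_sum_mulVec, ← hcsum]
    apply Finset.sum_congr rfl
    intro i _
    rw [_root_.map_mul, aeval_C, map_pow, aeval_X, Algebra.algebraMap_eq_smul_one,
      smul_mul_assoc, one_mul, Matrix.smul_mulVec]
  set p : ℂ[X] := q.comp (X - C 1) with hp
  have hpq : (Polynomial.aeval A) p = (Polynomial.aeval (A - 1)) q := by
    rw [hp, Polynomial.aeval_comp]
    congr 1
    simp
  have hp0 : p ≠ 0 := by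
    intro h
    apply hq0
    have : (q.comp (X - C 1)).comp (X + C 1) = q := by
      rw [Polynomial.comp_assoc]
      simp [sub_comp]
    rw [← this, ← hp, h, zero_comp]
  have hpdeg : p.natDegree ≤ r + 1 := by
    rw [hp, natDegree_comp, natDegree_X_sub_C, mul_one]
    exact hqdeg
  have hpev : (Polynomial.aeval A) p *ᵥ b = 0 := by rw [hpq]; exact hqev
  clear hpq hq0 hqdeg hqev hcsum hci₀ hq hp hdep
  -- Step 3: strong induction, dividing out factors of X
  suffices H : ∀ n : ℕ, ∀ p : ℂ[X], p.natDegree = n → p ≠ 0 → p.natDegree ≤ r + 1 →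
      (Polynomial.aeval A) p *ᵥ b = 0 → A⁻¹ *ᵥ b ∈ V by
    exact H _ p rfl hp0 hpdeg hpev
  clear hp0 hpdeg hpev p
  intro n
  induction n using Nat.strong_induction_on with
  | _ n ih =>
    intro p hpn hp0 hpdeg hpev
    by_cases hc0 : p.coeff 0 = 0
    · -- constant term zero: divide by X
      have hdvd : X * p.divX = p := by
        conv_rhs => rw [← Polynomial.X_mul_divX_add p]
        rw [hc0, map_zero, add_zero]
      have hdiv0 : p.divX ≠ 0 := by
        intro h
        apply hp0
        rw [← hdvd, h, mul_zero]
      have hd1 : 1 ≤ p.natDegree := by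
        rcases Nat.eq_zero_or_pos p.natDegree with h0 | h1
        · exfalso
          apply hp0
          rw [Polynomial.eq_C_of_natDegree_eq_zero h0, hc0, map_zero]
        · exact h1
      have hdivev : (Polynomial.aeval A) p.divX *ᵥ b = 0 := by
        apply Matrix.mulVec_injective_iff_isUnit.mpr hA
        have : A *ᵥ ((Polynomial.aeval A) p.divX *ᵥ b) = (Polynomial.aeval A) p *ᵥ b := by
          conv_rhs => rw [← hdvd]
          rw [Matrix.mulVec_mulVec, _root_.map_mul, aeval_X]
        rw [this, hpev, Matrix.mulVec_zero]
      have hdd : p.divX.natDegree = p.natDegree - 1 :=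
        Polynomial.natDegree_divX_eq_natDegree_tsub_one
      exact ih p.divX.natDegree (by omega) p.divX rfl hdiv0 (by omega) hdivev
    · -- nonzero constant term: solve for A⁻¹ b
      rw [Polynomial.aeval_eq_sum_range, krylov_sum_mulVec] at hpev
      simp only [Matrix.smul_mulVec] at hpev
      rw [Finset.sum_range_succ'] at hpev
      have key : p.coeff 0 • b = - ∑ i ∈ Finset.range p.natDegree, p.coeff (i+1) • (A ^ (i+1)) *ᵥ b := by
        rw [add_comm] at hpev
        have h0 := eq_neg_of_add_eq_zero_left hpev
        simpa using h0
      have hinv : ∀ i : ℕ, A⁻¹ * A ^ (i+1) = A ^ i := by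
        intro i
        rw [pow_succ', ← Matrix.mul_assoc, Matrix.nonsing_inv_mul _ hAdet, Matrix.one_mul]
      have key2 : p.coeff 0 • (A⁻¹ *ᵥ b) =
          - ∑ i ∈ Finset.range p.natDegree, p.coeff (i+1) • (A ^ i) *ᵥ b := by
        have h3 := congrArg (fun v => A⁻¹ *ᵥ v) key
        rw [Matrix.mulVec_smul] at h3
        rw [h3, ← Matrix.mulVecLin_apply, map_neg, map_sum]
        congr 1
        apply Finset.sum_congr rfl
        intro i _
        rw [_root_.map_smul, Matrix.mulVecLin_apply, Matrix.mulVec_mulVec, hinv i]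
      have hmemV : p.coeff 0 • (A⁻¹ *ᵥ b) ∈ V := by
        rw [key2]
        apply Submodule.neg_mem
        apply Submodule.sum_mem
        intro i hi
        apply Submodule.smul_mem
        apply hmem
        have := Finset.mem_range.mp hi
        omega
      have := Submodule.smul_mem V (p.coeff 0)⁻¹ hmemV
      rwa [smul_smul, inv_mul_cancel₀ hc0, one_smul] at this
end

section
/- If ℛ_BD2 is invertible, then the BD2 preconditioned matrix is a rank-at-most-2n perturbation of the identity: rank(ℛ_BD2⁻¹ · 𝒞_BD2 − I_{nℓ}) ≤ 2n. -/
open Matrix Kronecker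

/-- If `ℛ_BD2` is invertible, the BD2 preconditioned matrix is a
rank-at-most-`2n` perturbation of the identity:
`rank (ℛ_BD2⁻¹ * 𝒞_BD2 - 1) ≤ 2n`. -/
theorem bd2_preconditioned_matrix_rank_perturbation
    (n ℓ : ℕ) (hn : 1 ≤ n) (hℓ : 4 ≤ ℓ)
    (A₀ A₁ A₂ : Matrix (Fin n) (Fin n) ℂ)
    (N : Matrix (Fin ℓ) (Fin ℓ) ℂ)
    (hN : ∀ j k : Fin ℓ, N j k = if (j : ℕ) = (k : ℕ) + 1 then 1 else 0)
    (Sigma : Matrix (Fin ℓ) (Fin ℓ) ℂ)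
    (hSigma : ∀ j k : Fin ℓ, Sigma j k = if (j : ℕ) = ((k : ℕ) + 1) % ℓ then 1 else 0)
    (C R : Matrix (Fin ℓ × Fin n) (Fin ℓ × Fin n) ℂ)
    (hC : C = (1 : Matrix (Fin ℓ) (Fin ℓ) ℂ) ⊗ₖ A₀ + N ⊗ₖ A₁ + (N ^ 2) ⊗ₖ A₂)
    (hR : R = (1 : Matrix (Fin ℓ) (Fin ℓ) ℂ) ⊗ₖ A₀ + Sigma ⊗ₖ A₁ + (Sigma ^ 2) ⊗ₖ A₂)
    (hRinv : IsUnit R) :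
    (R⁻¹ * C - 1).rank ≤ 2 * n := by
  -- N and Sigma agree off row 0
  have h1 : ∀ i j : Fin ℓ, 1 ≤ (i : ℕ) → N i j = Sigma i j := by
    intro i j hi
    rw [hN, hSigma]
    rcases lt_or_ge ((j : ℕ) + 1) ℓ with h | h
    · rw [Nat.mod_eq_of_lt h]
    · have hj : (j : ℕ) + 1 = ℓ := by omega
      rw [hj, Nat.mod_self]
      have : (i : ℕ) ≠ ℓ := by have := i.isLt; omega
      simp only [this, if_false]
      have : (i : ℕ) ≠ 0 := by omega
      simp [this, hj]
  -- N^2 and Sigma^2 agree off rows 0,1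
  have h2 : ∀ i j : Fin ℓ, 2 ≤ (i : ℕ) → (N ^ 2) i j = (Sigma ^ 2) i j := by
    intro i j hi
    rw [pow_two, pow_two, Matrix.mul_apply, Matrix.mul_apply]
    apply Finset.sum_congr rfl
    intro k _
    rcases eq_or_ne (i : ℕ) ((k : ℕ) + 1) with hk | hk
    · have hk1 : 1 ≤ (k : ℕ) := by omega
      rw [h1 k j hk1]
      congr 1
      rw [hN, hSigma, hk, Nat.mod_eq_of_lt (by have := i.isLt; omega)]
    · have hNik : N i k = 0 := by rw [hN]; simp [hk]
      have hSik : Sigma i k = 0 := by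
        rw [hSigma]
        rcases lt_or_ge ((k : ℕ) + 1) ℓ with h | h
        · rw [Nat.mod_eq_of_lt h]; simp [hk]
        · have hkk : (k : ℕ) + 1 = ℓ := by omega
          rw [hkk, Nat.mod_self]
          have : (i : ℕ) ≠ 0 := by omega
          simp [this]
      rw [hNik, hSik, zero_mul, zero_mul]
  -- The difference D := C - R vanishes on rows with first index ≥ 2
  set D : Matrix (Fin ℓ × Fin n) (Fin ℓ × Fin n) ℂ := C - R with hD
  have hDzero : ∀ (r k : Fin ℓ × Fin n), 2 ≤ (r.1 : ℕ) → D r k = 0 := by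
    rintro ⟨i, a⟩ ⟨j, b⟩ hi
    have hi' : 2 ≤ (i : ℕ) := hi
    simp only [hD, hC, hR, Matrix.sub_apply, Matrix.add_apply, Matrix.kroneckerMap_apply]
    rw [h1 i j (by omega), h2 i j hi']
    ring
  -- Factor D = E * F through Fin 2 × Fin n
  have h2ℓ : 2 ≤ ℓ := by omega
  set emb : Fin 2 × Fin n → Fin ℓ × Fin n :=
    fun b => (⟨(b.1 : ℕ), lt_of_lt_of_le b.1.isLt h2ℓ⟩, b.2) with hemb
  have hembinj : Function.Injective emb := by
    rintro ⟨b1, b2⟩ ⟨c1, c2⟩ h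
    simp only [hemb, Prod.mk.injEq, Fin.mk.injEq] at h
    ext
    · exact h.1
    · exact congrArg Fin.val h.2
  set E : Matrix (Fin ℓ × Fin n) (Fin 2 × Fin n) ℂ :=
    fun r b => if r = emb b then 1 else 0 with hE
  set F : Matrix (Fin 2 × Fin n) (Fin ℓ × Fin n) ℂ := fun b k => D (emb b) k with hF
  have hfact : D = E * F := by
    ext r k
    rw [Matrix.mul_apply]
    rcases lt_or_ge (r.1 : ℕ) 2 with hr | hr
    · set b₀ : Fin 2 × Fin n := (⟨(r.1 : ℕ), hr⟩, r.2) with hb₀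
      have hemb₀ : emb b₀ = r := by
        simp only [hemb, hb₀]
      rw [Finset.sum_eq_single b₀]
      · simp [hE, hF, hemb₀]
      · intro b _ hb
        have : r ≠ emb b := by
          intro hcontra
          exact hb (hembinj (by rw [← hcontra, hemb₀]))
        simp [hE, this]
      · intro h; exact absurd (Finset.mem_univ b₀) h
    · rw [hDzero r k hr]
      symm
      apply Finset.sum_eq_zero
      intro b _
      have : r ≠ emb b := by
        intro hcontra
        have : (r.1 : ℕ) < 2 := by rw [hcontra]; exact b.1.isLt
        omega
      simp [hE, this]
  -- Now conclude
  have hRdet : IsUnit R.det := (Matrix.isUnit_iff_isUnit_det R).mp hRinv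
  have key : R⁻¹ * C - 1 = R⁻¹ * D := by
    rw [hD, Matrix.mul_sub, Matrix.nonsing_inv_mul R hRdet]
  rw [key, hfact, ← Matrix.mul_assoc]
  calc ((R⁻¹ * E) * F).rank ≤ (R⁻¹ * E).rank := Matrix.rank_mul_le_left _ _
    _ ≤ Fintype.card (Fin 2 × Fin n) := Matrix.rank_le_card_width _
    _ = 2 * n := by simp
end
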